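/- For every integer m ≥ 0, ∑_{j=1}^{m} φ(m-j|m) · ∑_{i=0}^{j-1} 1/(1 - y q^i) = ∑_{k=0}^{m-1} 1/(1 - μ y q^k), where φ(l|m) = y^l (μ;q)_l (y;q)_{m-l} / (μy;q)_m · [m choose l]_q. -/

import Mathlib

noncomputable def qPoch (z q : ℝ) (m : ℕ) : ℝ := ∏ j ∈ Finset.range m, (1 - z * q ^ j)

noncomputable def qBinom (q : ℝ) (m l : ℕ) : ℝ :=
  if l ≤ m then qPoch q q m / (qPoch q q l * qPoch q q (m - l)) else 0

noncomputable def phi (q μ y : ℝ) (l m : ℕ) : ℝ :=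
  y ^ l * qPoch μ q l * qPoch y q (m - l) / qPoch (μ * y) q m * qBinom q m l

open Finset

lemma qPoch_succ (z q : ℝ) (n : ℕ) : qPoch z q (n+1) = qPoch z q n * (1 - z * q^n) :=
  Finset.prod_range_succ _ _

lemma qPoch_pos {q : ℝ} (hq0 : 0 < q) (hq1 : q < 1) (n : ℕ) : 0 < qPoch q q n := by
  apply Finset.prod_pos
  intro j _
  have h1 : q ^ j ≤ 1 := pow_le_one₀ hq0.le hq1.le
  nlinarith

lemma qBinom_zero {q : ℝ} (hq0 : 0 < q) (hq1 : q < 1) (m : ℕ) : qBinom q m 0 = 1 := by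
  rw [qBinom, if_pos (Nat.zero_le m)]
  simp only [Nat.sub_zero, qPoch]
  rw [Finset.prod_range_zero, one_mul]
  exact div_self (qPoch_pos hq0 hq1 m).ne'

lemma qBinom_pascal {q : ℝ} (hq0 : 0 < q) (hq1 : q < 1) (m l : ℕ) :
    qBinom q (m+1) (l+1) = qBinom q m (l+1) + q^(m-l) * qBinom q m l := by
  rcases lt_trichotomy l m with h | h | h
  · have h1 : l + 1 ≤ m + 1 := by omega
    have h2 : l + 1 ≤ m := by omega
    have h3 : l ≤ m := by omega
    rw [qBinom, qBinom, qBinom, if_pos h1, if_pos h2, if_pos h3]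
    have e1 : m + 1 - (l+1) = (m - (l+1)) + 1 := by omega
    have e2 : m - l = (m - (l+1)) + 1 := by omega
    rw [e1, e2, qPoch_succ q q m, qPoch_succ q q (m-(l+1)), qPoch_succ q q l]
    have n1 := (qPoch_pos hq0 hq1 m).ne'
    have n2 := (qPoch_pos hq0 hq1 l).ne'
    have n3 := (qPoch_pos hq0 hq1 (m - (l+1))).ne'
    have n4 : (1 : ℝ) - q * q ^ l ≠ 0 := by
      have h1 : q ^ l ≤ 1 := pow_le_one₀ hq0.le hq1.le
      nlinarith
    have n5 : (1 : ℝ) - q * q ^ (m - (l+1)) ≠ 0 := by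
      have h1 : q ^ (m - (l+1)) ≤ 1 := pow_le_one₀ hq0.le hq1.le
      nlinarith
    have t1 : q * q ^ (m - (l+1)) = q ^ ((m - (l+1)) + 1) := (pow_succ' q _).symm
    have t2 : q ^ ((m - (l+1)) + 1) * q ^ l = q ^ m := by
      rw [← pow_add]; congr 1; omega
    have key : (1 : ℝ) - q * q ^ m = (1 - q * q ^ (m - (l+1))) + q^((m-(l+1))+1) * (1 - q * q^l) := by
      linear_combination t1 + q * t2
    field_simp
    linear_combination key
  · subst h
    rw [qBinom, qBinom, qBinom, if_pos le_rfl, if_neg (by omega), if_pos le_rfl]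
    simp only [Nat.sub_self, pow_zero]
    have e0 : qPoch q q 0 = 1 := by simp [qPoch]
    rw [e0, mul_one, mul_one, div_self (qPoch_pos hq0 hq1 (l+1)).ne',
      div_self (qPoch_pos hq0 hq1 l).ne']
    ring
  · rw [qBinom, qBinom, qBinom, if_neg (by omega), if_neg (by omega), if_neg (by omega)]
    ring

lemma vandermonde {q : ℝ} (hq0 : 0 < q) (hq1 : q < 1) (μ : ℝ) (m : ℕ) (y : ℝ) :
    ∑ l ∈ range (m+1), qBinom q m l * qPoch μ q l * (qPoch y q (m-l) * y^l)
      = qPoch (μ*y) q m := by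
  induction m with
  | zero => simp [qPoch, qBinom_zero hq0 hq1]
  | succ m ih =>
    rw [Finset.sum_range_succ']
    have e0 : qBinom q (m+1) 0 * qPoch μ q 0 * (qPoch y q (m+1-0) * y^0)
        = qBinom q m 0 * qPoch μ q 0 * (qPoch y q (m+1-0) * y^0) := by
      rw [qBinom_zero hq0 hq1, qBinom_zero hq0 hq1]
    rw [e0]
    have e1 : ∀ l ∈ range (m+1),
        qBinom q (m+1) (l+1) * qPoch μ q (l+1) * (qPoch y q (m+1-(l+1)) * y^(l+1))
        = qBinom q m (l+1) * qPoch μ q (l+1) * (qPoch y q (m+1-(l+1)) * y^(l+1))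
          + qBinom q m l * qPoch μ q l * (qPoch y q (m-l) * y^l) * (q^(m-l) * y * (1 - μ*q^l)) := by
      intro l _
      rw [qBinom_pascal hq0 hq1, qPoch_succ μ q l]
      have e : m+1-(l+1) = m - l := by omega
      rw [e]
      ring
    rw [Finset.sum_congr rfl e1, Finset.sum_add_distrib, add_right_comm]
    rw [← Finset.sum_range_succ' (fun l => qBinom q m l * qPoch μ q l * (qPoch y q (m+1-l) * y^l)) (m+1)]
    rw [Finset.sum_range_succ]
    have e2 : qBinom q m (m+1) = 0 := by rw [qBinom, if_neg (by omega)]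
    rw [e2, zero_mul, zero_mul, add_zero, ← Finset.sum_add_distrib]
    have e3 : ∀ l ∈ range (m+1),
        qBinom q m l * qPoch μ q l * (qPoch y q (m+1-l) * y^l)
          + qBinom q m l * qPoch μ q l * (qPoch y q (m-l) * y^l) * (q^(m-l) * y * (1 - μ*q^l))
        = qBinom q m l * qPoch μ q l * (qPoch y q (m-l) * y^l) * (1 - μ*y*q^m) := by
      intro l hl
      have e4 : m+1-l = (m-l)+1 := by
        have := Finset.mem_range.mp hl; omega
      have e5 : q^(m-l) * q^l = q^m := by
        rw [← pow_add]; congr 1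
        have := Finset.mem_range.mp hl; omega
      rw [e4, qPoch_succ]
      linear_combination (-(qBinom q m l * qPoch μ q l * qPoch y q (m-l) * y^l * μ * y)) * e5
    rw [Finset.sum_congr rfl e3, ← Finset.sum_mul, ih, qPoch_succ]

lemma qPoch_y_hasDerivAt (q : ℝ) (n : ℕ) (y : ℝ) :
    HasDerivAt (fun z => qPoch z q n)
      (∑ i ∈ range n, (∏ j ∈ (range n).erase i, (1 - y * q ^ j)) * (-(q ^ i))) y := by
  have h : ∀ i ∈ range n, HasDerivAt (fun z : ℝ => 1 - z * q ^ i) (-(q ^ i)) y := by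
    intro i _
    simpa using ((hasDerivAt_id y).mul_const (q ^ i)).const_sub 1
  simpa [qPoch, smul_eq_mul] using HasDerivAt.fun_finsetProd h

lemma qPoch_mul_hasDerivAt (q μ : ℝ) (n : ℕ) (y : ℝ) :
    HasDerivAt (fun z => qPoch (μ * z) q n)
      (∑ i ∈ range n, (∏ j ∈ (range n).erase i, (1 - μ * y * q ^ j)) * (-(μ * q ^ i))) y := by
  have h : ∀ i ∈ range n, HasDerivAt (fun z : ℝ => 1 - μ * z * q ^ i) (-(μ * q ^ i)) y := by
    intro i _
    simpa using (((hasDerivAt_id y).const_mul μ).mul_const (q ^ i)).const_sub 1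
  simpa [qPoch, smul_eq_mul] using HasDerivAt.fun_finsetProd h

theorem phi_current_identity (q μ y : ℝ) (m : ℕ) (hq0 : 0 < q) (hq1 : q < 1)
    (hy : ∀ i < m, 1 - y * q ^ i ≠ 0) (hμy : ∀ k < m, 1 - μ * y * q ^ k ≠ 0) :
    ∑ j ∈ Finset.Icc 1 m, phi q μ y (m - j) m * (∑ i ∈ Finset.range j, 1 / (1 - y * q ^ i))
      = ∑ k ∈ Finset.range m, 1 / (1 - μ * y * q ^ k) := by
  have hDne : qPoch (μ*y) q m ≠ 0 := by
    rw [qPoch]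
    exact Finset.prod_ne_zero_iff.mpr fun k hk => hμy k (Finset.mem_range.mp hk)
  have eraseY : ∀ n, n ≤ m → (∑ i ∈ range n, (∏ j ∈ (range n).erase i, (1 - y*q^j)) * (-(q^i)))
      = ∑ i ∈ range n, qPoch y q n / (1 - y*q^i) * (-(q^i)) := by
    intro n hn
    refine Finset.sum_congr rfl fun i hi => ?_
    congr 1
    have hne := hy i (lt_of_lt_of_le (Finset.mem_range.mp hi) hn)
    rw [eq_div_iff hne, mul_comm, qPoch]
    exact Finset.mul_prod_erase (range n) (fun j => 1 - y*q^j) hi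
  have eraseM : (∑ k ∈ range m, (∏ j ∈ (range m).erase k, (1 - μ*y*q^j)) * (-(μ*q^k)))
      = ∑ k ∈ range m, qPoch (μ*y) q m / (1 - μ*y*q^k) * (-(μ*q^k)) := by
    refine Finset.sum_congr rfl fun k hk => ?_
    congr 1
    have hne := hμy k (Finset.mem_range.mp hk)
    rw [eq_div_iff hne, mul_comm, qPoch]
    exact Finset.mul_prod_erase (range m) (fun j => 1 - μ*y*q^j) hk
  have hFterm : ∀ l ∈ range (m+1),
      HasDerivAt (fun z => qBinom q m l * qPoch μ q l * (qPoch z q (m-l) * z^l))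
        (qBinom q m l * qPoch μ q l *
          ((∑ i ∈ range (m-l), qPoch y q (m-l) / (1 - y*q^i) * (-(q^i))) * y^l
            + qPoch y q (m-l) * (↑l * y^(l-1)))) y := by
    intro l hl
    have h1 := (qPoch_y_hasDerivAt q (m-l) y).mul (hasDerivAt_pow l y)
    rw [eraseY (m-l) (by omega)] at h1
    exact h1.const_mul _
  have hF := HasDerivAt.fun_sum hFterm
  have hG := qPoch_mul_hasDerivAt q μ m y
  rw [eraseM] at hG
  have hfun : (fun z => ∑ l ∈ range (m+1), qBinom q m l * qPoch μ q l * (qPoch z q (m-l) * z^l))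
      = fun z => qPoch (μ*z) q m := funext fun z => vandermonde hq0 hq1 μ m z
  rw [hfun] at hF
  have deq := hF.unique hG
  have ymul := congrArg (HMul.hMul y) deq
  have eqL : y * (∑ l ∈ range (m+1), qBinom q m l * qPoch μ q l *
        ((∑ i ∈ range (m-l), qPoch y q (m-l) / (1 - y*q^i) * (-(q^i))) * y^l
          + qPoch y q (m-l) * (↑l * y^(l-1))))
      = ∑ l ∈ range (m+1), qBinom q m l * qPoch μ q l * (qPoch y q (m-l) * y^l) *
          ((m:ℝ) - ∑ i ∈ range (m-l), 1/(1-y*q^i)) := by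
    rw [Finset.mul_sum]
    refine Finset.sum_congr rfl fun l hl => ?_
    have hlm : l ≤ m := by have := Finset.mem_range.mp hl; omega
    have hin : y * (∑ i ∈ range (m-l), qPoch y q (m-l)/(1-y*q^i) * (-(q^i)))
        = qPoch y q (m-l) * (((m-l : ℕ):ℝ) - ∑ i ∈ range (m-l), 1/(1-y*q^i)) := by
      rw [Finset.mul_sum]
      have h2 : ∀ i ∈ range (m-l), y * (qPoch y q (m-l)/(1-y*q^i) * (-(q^i)))
          = qPoch y q (m-l) * (1 - 1/(1-y*q^i)) := by
        intro i hi
        have hne := hy i (by have := Finset.mem_range.mp hi; omega)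
        have e : (1:ℝ) - 1/(1-y*q^i) = (-(y*q^i))/(1-y*q^i) := by
          rw [eq_div_iff hne, sub_mul, one_mul, one_div, inv_mul_cancel₀ hne]; ring
        rw [e]; ring
      rw [Finset.sum_congr rfl h2, ← Finset.mul_sum]
      congr 1
      rw [Finset.sum_sub_distrib, Finset.sum_const, Finset.card_range, nsmul_eq_mul, mul_one]
    have hpow : y * ((l:ℝ) * y^(l-1)) = (l:ℝ) * y^l := by
      cases l with
      | zero => simp
      | succ n => rw [Nat.succ_sub_one, pow_succ]; ring
    have hcast : ((m-l : ℕ):ℝ) + (l:ℝ) = (m:ℝ) := by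
      rw [Nat.cast_sub hlm]; ring
    linear_combination (qBinom q m l * qPoch μ q l * y^l) * hin
      + (qBinom q m l * qPoch μ q l * qPoch y q (m-l)) * hpow
      + (qBinom q m l * qPoch μ q l * qPoch y q (m-l) * y^l) * hcast
  have eqR : y * (∑ k ∈ range m, qPoch (μ*y) q m/(1-μ*y*q^k) * (-(μ*q^k)))
      = qPoch (μ*y) q m * ((m:ℝ) - ∑ k ∈ range m, 1/(1-μ*y*q^k)) := by
    rw [Finset.mul_sum]
    have h2 : ∀ k ∈ range m, y * (qPoch (μ*y) q m/(1-μ*y*q^k) * (-(μ*q^k)))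
        = qPoch (μ*y) q m * (1 - 1/(1-μ*y*q^k)) := by
      intro k hk
      have hne := hμy k (Finset.mem_range.mp hk)
      have e : (1:ℝ) - 1/(1-μ*y*q^k) = (-(μ*y*q^k))/(1-μ*y*q^k) := by
        rw [eq_div_iff hne, sub_mul, one_mul, one_div, inv_mul_cancel₀ hne]; ring
      rw [e]; ring
    rw [Finset.sum_congr rfl h2, ← Finset.mul_sum]
    congr 1
    rw [Finset.sum_sub_distrib, Finset.sum_const, Finset.card_range, nsmul_eq_mul, mul_one]
  have main := (eqL.symm.trans ymul).trans eqR
  have hvdm := vandermonde hq0 hq1 μ m y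
  have hU : ∑ l ∈ range (m+1), qBinom q m l * qPoch μ q l * (qPoch y q (m-l) * y^l) *
        (∑ i ∈ range (m-l), 1/(1-y*q^i))
      = qPoch (μ*y) q m * (∑ k ∈ range m, 1/(1-μ*y*q^k)) := by
    have expand : ∑ l ∈ range (m+1), qBinom q m l * qPoch μ q l * (qPoch y q (m-l) * y^l) *
          ((m:ℝ) - ∑ i ∈ range (m-l), 1/(1-y*q^i))
        = (m:ℝ) * (∑ l ∈ range (m+1), qBinom q m l * qPoch μ q l * (qPoch y q (m-l) * y^l))
          - ∑ l ∈ range (m+1), qBinom q m l * qPoch μ q l * (qPoch y q (m-l) * y^l) *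
              (∑ i ∈ range (m-l), 1/(1-y*q^i)) := by
      rw [Finset.mul_sum, ← Finset.sum_sub_distrib]
      exact Finset.sum_congr rfl fun l _ => by ring
    rw [expand, hvdm] at main
    linear_combination -main
  have reindex : ∑ j ∈ Finset.Icc 1 m, phi q μ y (m-j) m * (∑ i ∈ range j, 1/(1-y*q^i))
      = ∑ l ∈ range m, phi q μ y l m * (∑ i ∈ range (m-l), 1/(1-y*q^i)) := by
    refine Finset.sum_bij' (fun j _ => m - j) (fun l _ => m - l) ?_ ?_ ?_ ?_ ?_
    · intro j hj
      simp only [Finset.mem_Icc] at hj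
      simp only [Finset.mem_range]; omega
    · intro l hl
      simp only [Finset.mem_range] at hl
      simp only [Finset.mem_Icc]; omega
    · intro j hj
      simp only [Finset.mem_Icc] at hj
      show m - (m - j) = j
      omega
    · intro l hl
      simp only [Finset.mem_range] at hl
      show m - (m - l) = l
      omega
    · intro j hj
      simp only [Finset.mem_Icc] at hj
      show phi q μ y (m-j) m * (∑ i ∈ range j, 1/(1-y*q^i))
        = phi q μ y (m-j) m * (∑ i ∈ range (m-(m-j)), 1/(1-y*q^i))
      have e : m - (m - j) = j := by omega
      rw [e]
  rw [reindex]
  have ext : ∑ l ∈ range m, phi q μ y l m * (∑ i ∈ range (m-l), 1/(1-y*q^i))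
      = ∑ l ∈ range (m+1), phi q μ y l m * (∑ i ∈ range (m-l), 1/(1-y*q^i)) := by
    rw [Finset.sum_range_succ, Nat.sub_self]
    simp
  rw [ext]
  have final : ∑ l ∈ range (m+1), phi q μ y l m * (∑ i ∈ range (m-l), 1/(1-y*q^i))
      = (∑ l ∈ range (m+1), qBinom q m l * qPoch μ q l * (qPoch y q (m-l) * y^l) *
          (∑ i ∈ range (m-l), 1/(1-y*q^i))) / qPoch (μ*y) q m := by
    rw [Finset.sum_div]
    refine Finset.sum_congr rfl fun l hl => ?_
    rw [phi]
    ring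
  rw [final, hU, mul_comm, mul_div_assoc, div_self hDne, mul_one]
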